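/- Let n ≥ 1, t0 ∈ ℝ, y0 ∈ ℝ^n, a > 0. If f : [t0, t0+a] × ℝ^n → ℝ^n is continuous and bounded, then there exists a differentiable function φ : [t0, t0+a] → ℝ^n with φ(t0) = y0 and φ'(t) = f(t, φ(t)) for all t ∈ [t0, t0+a]. -/

import Mathlib

open Set intervalIntegral MeasureTheory Filter Topology BoundedContinuousFunction

noncomputable def peanoG {n : ℕ} (y0 : Fin n → ℝ) (t0 : ℝ)
    (Fc : ℝ → (Fin n → ℝ) → (Fin n → ℝ)) (ε : ℝ) : ℕ → ℝ → (Fin n → ℝ)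
  | 0 => fun _ => y0
  | (m+1) => fun t => y0 + ∫ s in t0..(max t t0), Fc s (peanoG y0 t0 Fc ε m (s - ε))

section AuxLemmas

variable {n : ℕ} {y0 : Fin n → ℝ} {t0 M ε : ℝ}
  {Fc : ℝ → (Fin n → ℝ) → (Fin n → ℝ)}

theorem peanoG_lipschitz (hFc : Continuous fun p : ℝ × (Fin n → ℝ) => Fc p.1 p.2)
    (hFb : ∀ t y, ‖Fc t y‖ ≤ M) (hM : 0 ≤ M) :
    ∀ m, LipschitzWith (Real.toNNReal M) (peanoG y0 t0 Fc ε m) := by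
  intro m
  induction m with
  | zero => exact (LipschitzWith.const y0).weaken zero_le
  | succ m ih =>
    have hcont : Continuous fun s => Fc s (peanoG y0 t0 Fc ε m (s - ε)) :=
      hFc.comp (continuous_id.prodMk (ih.continuous.comp (continuous_sub_right ε)))
    apply LipschitzWith.of_dist_le_mul
    intro u v
    have hint : ∀ x y : ℝ, IntervalIntegrable
        (fun s => Fc s (peanoG y0 t0 Fc ε m (s - ε))) volume x y :=
      fun x y => hcont.intervalIntegrable x y
    simp only [peanoG, dist_eq_norm, add_sub_add_left_eq_sub]
    rw [integral_interval_sub_left (hint t0 (max u t0)) (hint t0 (max v t0))]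
    calc ‖∫ s in (max v t0)..(max u t0), Fc s (peanoG y0 t0 Fc ε m (s - ε))‖
        ≤ M * |max u t0 - max v t0| := by
          apply intervalIntegral.norm_integral_le_of_norm_le_const
          intro s _
          exact hFb _ _
      _ ≤ M * |u - v| :=
          mul_le_mul_of_nonneg_left (abs_max_sub_max_le_abs u v t0) hM
      _ = (Real.toNNReal M) * dist u v := by
          rw [Real.coe_toNNReal M hM, Real.dist_eq]

theorem peanoG_left {t : ℝ} (ht : t ≤ t0) :
    ∀ m, peanoG y0 t0 Fc ε m t = y0 := by
  intro m
  cases m with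
  | zero => rfl
  | succ m => simp [peanoG, max_eq_right ht]

theorem peanoG_stable (hε : 0 < ε) :
    ∀ m : ℕ, ∀ t : ℝ, t ≤ t0 + (m : ℝ) * ε →
      peanoG y0 t0 Fc ε (m+1) t = peanoG y0 t0 Fc ε m t := by
  intro m
  induction m with
  | zero =>
    intro t ht
    simp only [Nat.cast_zero, zero_mul, add_zero] at ht
    exact peanoG_left ht 1
  | succ m ih =>
    intro t ht
    show peanoG y0 t0 Fc ε (m+2) t = peanoG y0 t0 Fc ε (m+1) t
    have hL : peanoG y0 t0 Fc ε (m+2) t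
        = y0 + ∫ s in t0..(max t t0), Fc s (peanoG y0 t0 Fc ε (m+1) (s - ε)) := rfl
    have hR : peanoG y0 t0 Fc ε (m+1) t
        = y0 + ∫ s in t0..(max t t0), Fc s (peanoG y0 t0 Fc ε m (s - ε)) := rfl
    rw [hL, hR]
    congr 1
    apply intervalIntegral.integral_congr
    intro s hs
    show Fc s (peanoG y0 t0 Fc ε (m+1) (s - ε)) = Fc s (peanoG y0 t0 Fc ε m (s - ε))
    have h1 : t0 ≤ max t t0 := le_max_right _ _
    rw [uIcc_of_le h1] at hs
    have hs2 : s ≤ t0 + (m+1) * ε := by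
      have : max t t0 ≤ t0 + (m+1) * ε := by
        apply max_le
        · push_cast at ht ⊢; linarith
        · nlinarith [hε.le, (Nat.cast_nonneg m : (0:ℝ) ≤ m)]
      exact le_trans hs.2 this
    have : s - ε ≤ t0 + m * ε := by push_cast at hs2 ⊢; linarith
    rw [ih (s - ε) this]

theorem peanoG_fixed (hε : 0 < ε) {N : ℕ} {t : ℝ} (ht : t0 ≤ t)
    (ht' : t ≤ t0 + (N : ℝ) * ε) :
    peanoG y0 t0 Fc ε N t = y0 + ∫ s in t0..t, Fc s (peanoG y0 t0 Fc ε N (s - ε)) := by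
  have hL : peanoG y0 t0 Fc ε (N+1) t
      = y0 + ∫ s in t0..(max t t0), Fc s (peanoG y0 t0 Fc ε N (s - ε)) := rfl
  rw [← peanoG_stable hε N t ht', hL, max_eq_left ht]

end AuxLemmas

set_option maxHeartbeats 1000000 in
set_option synthInstance.maxHeartbeats 200000 in
/-- If `f : [t0, t0+a] × ℝⁿ → ℝⁿ` is continuous and bounded, then the IVP
`y' = f(t,y)`, `y t0 = y0` has a solution defined on all of `[t0, t0+a]`. -/
theorem peano_bounded_global (n : ℕ) (hn : 1 ≤ n) (t0 : ℝ) (y0 : Fin n → ℝ)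
    (a : ℝ) (ha : 0 < a)
    (f : ℝ → (Fin n → ℝ) → (Fin n → ℝ))
    (hf : ContinuousOn (fun p : ℝ × (Fin n → ℝ) => f p.1 p.2)
      (Icc t0 (t0 + a) ×ˢ (univ : Set (Fin n → ℝ))))
    (hbdd : ∃ M : ℝ, ∀ t ∈ Icc t0 (t0 + a), ∀ y : Fin n → ℝ, ‖f t y‖ ≤ M) :
    ∃ φ : ℝ → Fin n → ℝ,
      φ t0 = y0 ∧
      ∀ t ∈ Icc t0 (t0 + a),
        HasDerivWithinAt φ (f t (φ t)) (Icc t0 (t0 + a)) t := by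
  obtain ⟨M0, hM0⟩ := hbdd
  set M : ℝ := max M0 0 with hMdef
  have hM : 0 ≤ M := le_max_right _ _
  have h0a : t0 ≤ t0 + a := by linarith
  set Fc : ℝ → (Fin n → ℝ) → (Fin n → ℝ) :=
    fun t y => f (projIcc t0 (t0+a) h0a t : ℝ) y with hFcdef
  have hFc : Continuous fun p : ℝ × (Fin n → ℝ) => Fc p.1 p.2 := by
    show Continuous ((fun p : ℝ × (Fin n → ℝ) => f p.1 p.2) ∘
      (fun p : ℝ × (Fin n → ℝ) => ((projIcc t0 (t0+a) h0a p.1 : ℝ), p.2)))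
    apply hf.comp_continuous
    · exact ((continuous_subtype_val.comp (continuous_projIcc.comp continuous_fst)).prodMk
        continuous_snd)
    · intro p
      exact ⟨(projIcc t0 (t0+a) h0a p.1).2, mem_univ _⟩
  have hFb : ∀ t y, ‖Fc t y‖ ≤ M :=
    fun t y => (hM0 _ (projIcc t0 (t0+a) h0a t).2 y).trans (le_max_left _ _)
  have hFeq : ∀ t ∈ Icc t0 (t0+a), ∀ y, Fc t y = f t y := by
    intro t ht y
    simp only [hFcdef, projIcc_of_mem h0a ht]
  -- the approximating sequence
  set ε : ℕ → ℝ := fun k => a / (k+1) with hεdef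
  have hεpos : ∀ k, 0 < ε k := fun k => div_pos ha (by positivity)
  have hεto : Tendsto ε atTop (𝓝 0) := by
    have h2 := tendsto_one_div_add_atTop_nhds_zero_nat.const_mul a
    rw [mul_zero] at h2
    simpa [hεdef, mul_one_div, div_eq_mul_inv] using h2
  set g : ℕ → ℝ → (Fin n → ℝ) := fun k => peanoG y0 t0 Fc (ε k) (k+1) with hgdef
  have hglip : ∀ k, LipschitzWith (Real.toNNReal M) (g k) :=
    fun k => peanoG_lipschitz hFc hFb hM _
  have hgt0 : ∀ k, ∀ t ≤ t0, g k t = y0 := fun k t ht => peanoG_left ht _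
  have hgfix : ∀ k, ∀ t, t0 ≤ t → t ≤ t0 + a →
      g k t = y0 + ∫ s in t0..t, Fc s (g k (s - ε k)) := by
    intro k t h1 h2
    apply peanoG_fixed (hεpos k) h1
    have : ((k+1 : ℕ) : ℝ) * ε k = a := by
      rw [hεdef]
      push_cast
      field_simp
    linarith [this]
  have hgdist : ∀ k u v, dist (g k u) (g k v) ≤ M * dist u v := by
    intro k u v
    have := (hglip k).dist_le_mul u v
    rwa [Real.coe_toNNReal M hM] at this
  have hgball : ∀ k, ∀ t ∈ Icc t0 (t0+a), g k t ∈ Metric.closedBall y0 (M * a) := by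
    intro k t ht
    rw [Metric.mem_closedBall]
    have h1 := hgdist k t t0
    rw [hgt0 k t0 le_rfl] at h1
    have h2 : dist t t0 ≤ a := by
      rw [Real.dist_eq, abs_of_nonneg (by linarith [ht.1])]
      linarith [ht.2]
    calc dist (g k t) y0 ≤ M * dist t t0 := h1
      _ ≤ M * a := mul_le_mul_of_nonneg_left h2 hM
  -- Arzelà–Ascoli
  set u : ℕ → (↥(Icc t0 (t0+a)) →ᵇ (Fin n → ℝ)) := fun k =>
    BoundedContinuousFunction.mkOfCompact
      ⟨fun x => g k x, ((hglip k).continuous).comp continuous_subtype_val⟩ with hudef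
  have hucoe : ∀ k x, u k x = g k x := fun _ _ => rfl
  have hequi : Equicontinuous ((↑) : Set.range u → (Icc t0 (t0+a)) → (Fin n → ℝ)) := by
    apply Metric.equicontinuous_of_continuity_modulus (fun d => M * d)
    · have : Tendsto (fun d : ℝ => M * d) (𝓝 0) (𝓝 (M * 0)) :=
        (continuous_const.mul continuous_id).tendsto 0
      simpa using this
    · rintro x y ⟨v, k, rfl⟩
      show dist (u k x) (u k y) ≤ M * dist x y
      rw [hucoe, hucoe, Subtype.dist_eq]
      exact hgdist k x y
  have hcomp : IsCompact (closure (Set.range u)) := by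
    apply BoundedContinuousFunction.arzela_ascoli (Metric.closedBall y0 (M*a))
      (isCompact_closedBall _ _) (Set.range u) _ hequi
    rintro v x ⟨k, rfl⟩
    exact hgball k x x.2
  obtain ⟨ψ, hψmem, σ, hσmono, hσtend⟩ :=
    hcomp.tendsto_subseq (fun k => subset_closure (Set.mem_range_self k))
  have hdist0 : Tendsto (fun j => dist (u (σ j)) ψ) atTop (𝓝 0) :=
    tendsto_iff_dist_tendsto_zero.mp hσtend
  have hpt : ∀ x : Icc t0 (t0+a), Tendsto (fun j => g (σ j) x) atTop (𝓝 (ψ x)) := by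
    intro x
    rw [tendsto_iff_dist_tendsto_zero]
    apply squeeze_zero (fun j => dist_nonneg)
      (fun j => (BoundedContinuousFunction.dist_coe_le_dist x)) hdist0
  set φ : ℝ → (Fin n → ℝ) := fun t => ψ (projIcc t0 (t0+a) h0a t) with hφdef
  have hφcont : Continuous φ := ψ.continuous.comp continuous_projIcc
  have hφeq : ∀ t (ht : t ∈ Icc t0 (t0+a)), φ t = ψ ⟨t, ht⟩ := by
    intro t ht
    simp only [hφdef, projIcc_of_mem h0a ht]
  have hεσ : Tendsto (fun j => ε (σ j)) atTop (𝓝 0) := hεto.comp hσmono.tendsto_atTop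
  -- the limit satisfies the integral equation
  have hkey : ∀ t ∈ Icc t0 (t0+a), φ t = y0 + ∫ s in t0..t, Fc s (φ s) := by
    intro t ht
    have hlim1 : Tendsto (fun j => g (σ j) t) atTop (𝓝 (φ t)) := by
      rw [hφeq t ht]
      exact hpt ⟨t, ht⟩
    have hconv : ∀ s ∈ Icc t0 (t0+a),
        Tendsto (fun j => g (σ j) (s - ε (σ j))) atTop (𝓝 (φ s)) := by
      intro s hs
      rw [tendsto_iff_dist_tendsto_zero]
      have hb : ∀ j, dist (g (σ j) (s - ε (σ j))) (φ s)
          ≤ M * ε (σ j) + dist (g (σ j) s) (ψ ⟨s, hs⟩) := by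
        intro j
        calc dist (g (σ j) (s - ε (σ j))) (φ s)
            ≤ dist (g (σ j) (s - ε (σ j))) (g (σ j) s) + dist (g (σ j) s) (φ s) :=
              dist_triangle _ _ _
          _ ≤ M * ε (σ j) + dist (g (σ j) s) (ψ ⟨s, hs⟩) := by
              rw [hφeq s hs]
              gcongr
              have := hgdist (σ j) (s - ε (σ j)) s
              rwa [Real.dist_eq, sub_sub_cancel_left, abs_neg,
                abs_of_pos (hεpos (σ j))] at this
      have hz : Tendsto (fun j => M * ε (σ j) + dist (g (σ j) s) (ψ ⟨s, hs⟩))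
          atTop (𝓝 0) := by
        have h1 : Tendsto (fun j => M * ε (σ j)) atTop (𝓝 (M * 0)) :=
          hεσ.const_mul M
        have h2 : Tendsto (fun j => dist (g (σ j) s) (ψ ⟨s, hs⟩)) atTop (𝓝 0) :=
          tendsto_iff_dist_tendsto_zero.mp (hpt ⟨s, hs⟩)
        simpa using h1.add h2
      exact squeeze_zero (fun j => dist_nonneg) hb hz
    have hint2 : Tendsto (fun j => ∫ s in t0..t, Fc s (g (σ j) (s - ε (σ j))))
        atTop (𝓝 (∫ s in t0..t, Fc s (φ s))) := by
      apply intervalIntegral.tendsto_integral_filter_of_dominated_convergence (fun _ => M)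
      · apply Filter.Eventually.of_forall
        intro j
        exact (hFc.comp (continuous_id.prodMk
          (((hglip (σ j)).continuous).comp (continuous_sub_right _)))).aestronglyMeasurable
      · apply Filter.Eventually.of_forall
        intro j
        exact ae_of_all _ (fun s _ => hFb _ _)
      · exact intervalIntegrable_const
      · apply ae_of_all
        intro s hs
        have hs' : s ∈ Icc t0 (t0+a) := by
          rw [uIoc_of_le ht.1] at hs
          exact ⟨le_of_lt hs.1, le_trans hs.2 ht.2⟩
        exact (hFc.tendsto (s, φ s)).comp (tendsto_const_nhds.prodMk_nhds (hconv s hs'))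
    have hseq : (fun j => g (σ j) t)
        = fun j => y0 + ∫ s in t0..t, Fc s (g (σ j) (s - ε (σ j))) :=
      funext fun j => hgfix _ t ht.1 ht.2
    rw [hseq] at hlim1
    exact tendsto_nhds_unique hlim1 (tendsto_const_nhds.add hint2)
  refine ⟨φ, ?_, ?_⟩
  · have h := hkey t0 ⟨le_rfl, h0a⟩
    simpa using h
  · intro t ht
    have hGc : Continuous fun s => Fc s (φ s) := hFc.comp (continuous_id.prodMk hφcont)
    have hΦ : HasDerivAt (fun v => y0 + ∫ s in t0..v, Fc s (φ s)) (Fc t (φ t)) t :=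
      (intervalIntegral.integral_hasDerivAt_right (hGc.intervalIntegrable _ _)
        (hGc.stronglyMeasurableAtFilter _ _) hGc.continuousAt).const_add y0
    have hder : HasDerivWithinAt φ (Fc t (φ t)) (Icc t0 (t0+a)) t :=
      (hΦ.hasDerivWithinAt (s := Icc t0 (t0+a))).congr
        (fun s hs => hkey s hs) (hkey t ht)
    rwa [hFeq t ht (φ t)] at hder
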